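/- arXiv:2303.11636 — 2 statements merged into one kernel-verified Lean document; each statement's English description precedes it below -/
import Mathlib

section
/- Let I ⊆ ℕ, h(i) ≤ j(i) for each i, and suppose weights satisfy the almost uniform condition: w(i,j,k) = n_k for all (i,j) outside a finite exceptional set and p·n_k ≤ w(i,j,k) ≤ q·n_k everywhere, with p, q fixed positive rationals. If the limit L = lim_k (Σ_{i∈I, i<k} h(i)) / (Σ_{i<k} j(i)) exists, then lim_k (Σ_{i∈I, i<k} Σ_{j<h(i)} w(i,j,k)) / (Σ_{i<k} Σ_{j<j(i)} w(i,j,k)) also exists and equals L. -/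
open Filter

private lemma stmt17_aux (s : Finset ℕ) (m : ℕ → ℕ) (d : ℕ → ℕ → ℝ)
    (b : Set (ℕ × ℕ)) (hbfin : b.Finite) (M : ℝ) (hM : 0 ≤ M)
    (hz : ∀ i jj, jj < m i → (i, jj) ∉ b → d i jj = 0)
    (hb : ∀ i jj, jj < m i → |d i jj| ≤ M) :
    |∑ i ∈ s, ∑ jj ∈ Finset.range (m i), d i jj| ≤ (hbfin.toFinset.card : ℝ) * M := by
  classical
  have h1 : |∑ i ∈ s, ∑ jj ∈ Finset.range (m i), d i jj|
      ≤ ∑ i ∈ s, ∑ jj ∈ Finset.range (m i), |d i jj| := by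
    refine (Finset.abs_sum_le_sum_abs _ _).trans ?_
    exact Finset.sum_le_sum fun i _ => Finset.abs_sum_le_sum_abs _ _
  have h2 : ∑ i ∈ s, ∑ jj ∈ Finset.range (m i), |d i jj|
      = ∑ x ∈ s.sigma (fun i => Finset.range (m i)), |d x.1 x.2| := by
    rw [Finset.sum_sigma]
  set T := (s.sigma (fun i => Finset.range (m i))).filter (fun x => (x.1, x.2) ∈ b) with hT
  have h3 : ∑ x ∈ s.sigma (fun i => Finset.range (m i)), |d x.1 x.2|
      = ∑ x ∈ T, |d x.1 x.2| := by
    refine (Finset.sum_filter_of_ne ?_).symm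
    intro x hx hne
    by_contra hxb
    have hmem := Finset.mem_sigma.mp hx
    exact hne (by rw [hz x.1 x.2 (Finset.mem_range.mp hmem.2) hxb, abs_zero])
  have h4 : ∑ x ∈ T, |d x.1 x.2| ≤ (T.card : ℝ) * M := by
    have := Finset.sum_le_card_nsmul T (fun x => |d x.1 x.2|) M
      (fun x hx => hb x.1 x.2 (Finset.mem_range.mp (Finset.mem_sigma.mp (Finset.mem_filter.mp hx).1).2))
    simpa [nsmul_eq_mul] using this
  have h5 : T.card ≤ hbfin.toFinset.card := by
    refine Finset.card_le_card_of_injOn (fun x => (x.1, x.2)) ?_ ?_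
    · intro x hx
      exact hbfin.mem_toFinset.mpr (Finset.mem_filter.mp hx).2
    · intro x _ y _ hxy
      have h1 : x.1 = y.1 := congrArg Prod.fst hxy
      have h2 : x.2 = y.2 := congrArg Prod.snd hxy
      exact Sigma.ext h1 (heq_of_eq h2)
  calc |∑ i ∈ s, ∑ jj ∈ Finset.range (m i), d i jj|
      ≤ ∑ x ∈ T, |d x.1 x.2| := by rw [← h3, ← h2]; exact h1
    _ ≤ (T.card : ℝ) * M := h4
    _ ≤ (hbfin.toFinset.card : ℝ) * M := by
        exact mul_le_mul_of_nonneg_right (by exact_mod_cast h5) hM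

theorem stmt17 (j : ℕ → ℕ) (hj : ∀ i, 1 ≤ j i)
    (h : ℕ → ℕ) (hh : ∀ i, h i ≤ j i)
    (I : Set ℕ) [DecidablePred (· ∈ I)]
    (n : ℕ → ℝ) (hn : ∀ k, 0 < n k)
    (w : ℕ → ℕ → ℕ → ℝ)
    (b : Set (ℕ × ℕ)) (hbfin : b.Finite)
    (p q : ℚ) (hp : 0 < p) (hp1 : (p : ℝ) ≤ 1) (hq1 : (1 : ℝ) ≤ (q : ℝ))
    (huniform : ∀ i jj k, jj < j i → (i, jj) ∉ b → w i jj k = n k)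
    (hbound : ∀ i jj k, jj < j i → (p : ℝ) * n k ≤ w i jj k ∧ w i jj k ≤ (q : ℝ) * n k)
    (htot : Tendsto (fun k => ∑ i ∈ Finset.range k, j i) atTop atTop)
    (L : ℝ)
    (hL : Tendsto (fun k =>
        ((∑ i ∈ (Finset.range k).filter (· ∈ I), h i : ℕ) : ℝ) /
          ((∑ i ∈ Finset.range k, j i : ℕ) : ℝ)) atTop (nhds L)) :
    Tendsto (fun k =>
        (∑ i ∈ (Finset.range k).filter (· ∈ I), ∑ jj ∈ Finset.range (h i), w i jj k) /
          (∑ i ∈ Finset.range k, ∑ jj ∈ Finset.range (j i), w i jj k))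
      atTop (nhds L) := by
  classical
  set C : ℕ → ℝ := fun k => ((∑ i ∈ (Finset.range k).filter (· ∈ I), h i : ℕ) : ℝ) with hC
  set T : ℕ → ℝ := fun k => ((∑ i ∈ Finset.range k, j i : ℕ) : ℝ) with hTdef
  set e : ℕ → ℝ := fun k =>
    (∑ i ∈ (Finset.range k).filter (· ∈ I), ∑ jj ∈ Finset.range (h i), (w i jj k - n k)) / n k
    with he
  set f : ℕ → ℝ := fun k =>
    (∑ i ∈ Finset.range k, ∑ jj ∈ Finset.range (j i), (w i jj k - n k)) / n k with hf
  set B : ℝ := (hbfin.toFinset.card : ℝ) * ((q : ℝ) + 1) with hB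
  have hnne : ∀ k, n k ≠ 0 := fun k => (hn k).ne'
  -- numerator / denominator decompositions
  have hNum : ∀ k, (∑ i ∈ (Finset.range k).filter (· ∈ I), ∑ jj ∈ Finset.range (h i), w i jj k)
      = n k * (C k + e k) := by
    intro k
    rw [mul_add, mul_div_cancel₀ _ (hnne k)]
    simp only [hC, Finset.sum_sub_distrib, Finset.sum_const, Finset.card_range, nsmul_eq_mul]
    push_cast
    rw [← Finset.sum_mul]
    ring
  have hDen : ∀ k, (∑ i ∈ Finset.range k, ∑ jj ∈ Finset.range (j i), w i jj k)
      = n k * (T k + f k) := by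
    intro k
    rw [mul_add, mul_div_cancel₀ _ (hnne k)]
    simp only [hTdef, Finset.sum_sub_distrib, Finset.sum_const, Finset.card_range, nsmul_eq_mul]
    push_cast
    rw [← Finset.sum_mul]
    ring
  -- bounds on error terms
  have habs : ∀ (i jj k : ℕ), jj < j i → |w i jj k - n k| ≤ ((q : ℝ) + 1) * n k := by
    intro i jj k hlt
    obtain ⟨h1, h2⟩ := hbound i jj k hlt
    have hpn : 0 ≤ (p : ℝ) * n k := mul_nonneg (by positivity) (hn k).le
    rw [abs_le]
    constructor <;> nlinarith [hn k]
  have hbe : ∀ k, |e k| ≤ B := by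
    intro k
    have := stmt17_aux ((Finset.range k).filter (· ∈ I)) h (fun i jj => w i jj k - n k)
      b hbfin (((q : ℝ) + 1) * n k) (mul_nonneg (by linarith) (hn k).le)
      (fun i jj hlt hnb => by
        have := huniform i jj k (lt_of_lt_of_le hlt (hh i)) hnb
        simp [this])
      (fun i jj hlt => habs i jj k (lt_of_lt_of_le hlt (hh i)))
    rw [he]
    rw [abs_div, abs_of_pos (hn k), div_le_iff₀ (hn k)]
    calc |∑ i ∈ (Finset.range k).filter (· ∈ I), ∑ jj ∈ Finset.range (h i), (w i jj k - n k)|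
        ≤ (hbfin.toFinset.card : ℝ) * (((q : ℝ) + 1) * n k) := this
      _ = B * n k := by rw [hB]; ring
  have hbf : ∀ k, |f k| ≤ B := by
    intro k
    have := stmt17_aux (Finset.range k) j (fun i jj => w i jj k - n k)
      b hbfin (((q : ℝ) + 1) * n k) (mul_nonneg (by linarith) (hn k).le)
      (fun i jj hlt hnb => by
        have := huniform i jj k hlt hnb
        simp [this])
      (fun i jj hlt => habs i jj k hlt)
    rw [hf]
    rw [abs_div, abs_of_pos (hn k), div_le_iff₀ (hn k)]
    calc |∑ i ∈ Finset.range k, ∑ jj ∈ Finset.range (j i), (w i jj k - n k)|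
        ≤ (hbfin.toFinset.card : ℝ) * (((q : ℝ) + 1) * n k) := this
      _ = B * n k := by rw [hB]; ring
  -- T tends to infinity
  have hT : Tendsto T atTop atTop := tendsto_natCast_atTop_atTop.comp htot
  have hBT : Tendsto (fun k => B / T k) atTop (nhds 0) := tendsto_const_nhds.div_atTop hT
  have hTnonneg : ∀ k, 0 ≤ T k := fun k => by simp only [hTdef]; positivity
  have heT : Tendsto (fun k => e k / T k) atTop (nhds 0) := by
    refine squeeze_zero_norm (fun k => ?_) hBT
    rcases eq_or_lt_of_le (hTnonneg k) with h0 | h0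
    · simp [← h0]
    · rw [Real.norm_eq_abs, abs_div, abs_of_pos h0]
      gcongr
      exact hbe k
  have hfT : Tendsto (fun k => f k / T k) atTop (nhds 0) := by
    refine squeeze_zero_norm (fun k => ?_) hBT
    rcases eq_or_lt_of_le (hTnonneg k) with h0 | h0
    · simp [← h0]
    · rw [Real.norm_eq_abs, abs_div, abs_of_pos h0]
      gcongr
      exact hbf k
  -- the nice form tends to L
  have hnice : Tendsto (fun k => (C k / T k + e k / T k) / (1 + f k / T k)) atTop (nhds L) := by
    have h1 : Tendsto (fun k => C k / T k + e k / T k) atTop (nhds (L + 0)) := hL.add heT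
    have h2 : Tendsto (fun k => 1 + f k / T k) atTop (nhds (1 + 0)) :=
      tendsto_const_nhds.add hfT
    have := h1.div h2 (by norm_num)
    rw [add_zero, add_zero, div_one] at this
    exact this
  -- eventual equality
  refine hnice.congr' ?_
  filter_upwards [eventually_ge_atTop 1] with k hk
  have hT1 : (1 : ℝ) ≤ T k := by
    rw [hTdef]
    have : k ≤ ∑ i ∈ Finset.range k, j i := by
      calc k = ∑ _i ∈ Finset.range k, 1 := by simp
        _ ≤ ∑ i ∈ Finset.range k, j i := Finset.sum_le_sum fun i _ => hj i
    show (1 : ℝ) ≤ ((∑ i ∈ Finset.range k, j i : ℕ) : ℝ)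
    exact_mod_cast le_trans hk this
  have hTne : T k ≠ 0 := by linarith
  rw [hNum k, hDen k, mul_div_mul_left _ _ (hnne k)]
  have e1 : C k / T k + e k / T k = (C k + e k) / T k := by rw [add_div]
  have e2 : 1 + f k / T k = (T k + f k) / T k := by rw [add_div, div_self hTne]
  rw [e1, e2, div_div_div_cancel_right₀]
  exact hTne
end

section
/- For cuts A, B of nonnegative rationals, define A ≈ B iff int(A) ⊆ B ⊆ cl(A), where int(A) = A −̣ (A ÷̣ FN) and cl(A) = A +̣ (A ÷̣ FN). Then ≈ restricted to cuts of the form ⟦α⟧ ± FN with α infinite identifies external and internal perturbations: for every cut α strictly above FN (with α/FN > FN), one has (α −̇ FN) ≈ (α +̇ FN). -/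
variable (K : Type*) [Field K] [LinearOrder K] [IsStrictOrderedRing K]

/-- A cut: a downward-closed subset of the nonnegative elements with no greatest element. -/
def IsCutK (A : Set K) : Prop :=
  A ⊆ {x | 0 ≤ x} ∧ (∀ a b : K, 0 ≤ a → a ≤ b → b ∈ A → a ∈ A) ∧
    ∀ a ∈ A, ∃ b ∈ A, a < b

/-- The cut of finite (standard-bounded) elements. -/
def FNcut : Set K := {x | 0 ≤ x ∧ ∃ n : ℕ, x < (n : K)}

variable {K}

/-- `B' = B ∪ {min of the nonnegative complement of B}`. -/
def plusSetK (B : Set K) : Set K := B ∪ {b | IsLeast ({x | 0 ≤ x} \ B) b}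

/-- Internal sum. -/
def intSumK (A B : Set K) : Set K :=
  {x | 0 ≤ x ∧ ∃ a ∈ A, ∃ b ∈ B, x < a + b}

/-- External sum. -/
def extSumK (A B : Set K) : Set K :=
  {x | 0 ≤ x ∧ ∀ a, 0 ≤ a → a ∉ A → ∀ b, 0 ≤ b → b ∉ B → x < a + b}

/-- Internal difference. -/
def intDiffK (A B : Set K) : Set K :=
  {x | 0 ≤ x ∧ ∀ b ∈ plusSetK B, x + b ∈ A}

/-- External difference. -/
def extDiffK (A B : Set K) : Set K :=
  {x | 0 ≤ x ∧ ∃ b, 0 ≤ b ∧ b ∉ B ∧ x + b ∈ A}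

/-- Internal quotient. -/
def intQuotK (A B : Set K) : Set K :=
  {x | 0 ≤ x ∧ ∀ b ∈ plusSetK B, x * b ∈ A}

/-- External quotient. -/
def extQuotK (A B : Set K) : Set K :=
  {x | 0 ≤ x ∧ ∃ b, 0 ≤ b ∧ b ∉ B ∧ x * b ∈ A}

/-- Interior of a cut: `A −̣ (A ÷̣ FN)`. -/
def interiorCut (A : Set K) : Set K := intDiffK A (intQuotK A (FNcut K))

/-- Closure of a cut: `A +̣ (A ÷̣ FN)`. -/
def closureCut (A : Set K) : Set K := intSumK A (intQuotK A (FNcut K))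

/-- Equivalence of cuts: `A ≈ B` iff `int(A) ⊆ B ⊆ cl(A)`. -/
def cutEquiv (A B : Set K) : Prop := interiorCut A ⊆ B ∧ B ⊆ closureCut A

section Aux
variable {K : Type*} [Field K] [LinearOrder K] [IsStrictOrderedRing K]

lemma notFN_ge {x : K} (h0 : 0 ≤ x) (h : x ∉ FNcut K) (n : ℕ) : (n : K) ≤ x := by
  by_contra hn
  exact h ⟨h0, n, lt_of_not_ge hn⟩

lemma notFN_of_ge {x : K} (h : ∀ n : ℕ, (n : K) ≤ x) : x ∉ FNcut K := by
  rintro ⟨_, n, hn⟩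
  exact absurd (h n) (not_le.mpr hn)

lemma plusSet_FN {b : K} (hb : b ∈ plusSetK (FNcut K)) : b ∈ FNcut K := by
  rcases hb with hb | hb
  · exact hb
  · exfalso
    obtain ⟨⟨hb0, hbF⟩, hmin⟩ := hb
    have h1 : (1 : K) ≤ b := by exact_mod_cast notFN_ge hb0 hbF 1
    have hle : b ≤ b - 1 := by
      refine hmin ⟨by simpa using (by linarith : (0:K) ≤ b - 1), notFN_of_ge fun n => ?_⟩
      have := notFN_ge hb0 hbF (n + 1)
      push_cast at this
      linarith
    linarith
end Aux

theorem stmt19 {K : Type*} [Field K] [LinearOrder K] [IsStrictOrderedRing K] (α : Set K)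
    (hα : IsCutK K α) (hFNα : FNcut K ⊂ α)
    (hbig : FNcut K ⊂ extQuotK α (FNcut K)) :
    cutEquiv (extDiffK α (FNcut K)) (extSumK α (FNcut K)) := by

  obtain ⟨hα1, hα2, hα3⟩ := hα
  obtain ⟨x, hxE, hxF⟩ := Set.exists_of_ssubset hbig
  obtain ⟨hx0, c, hc0, hcF, hxc⟩ := hxE
  have hx1 : (1 : K) ≤ x := by exact_mod_cast notFN_ge hx0 hxF 1
  have hc_ge : ∀ n : ℕ, (n : K) ≤ c := notFN_ge hc0 hcF
  have hxc0 : 0 ≤ x * c := mul_nonneg hx0 hc0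
  have hxcF : x * c ∉ FNcut K := notFN_of_ge fun n =>
    le_trans (hc_ge n) (le_mul_of_one_le_left hc0 hx1)
  have zeroA : (0 : K) ∈ extDiffK α (FNcut K) :=
    ⟨le_refl 0, x * c, hxc0, hxcF, by simpa using hxc⟩
  -- every natural multiple of x is in the internal quotient Q
  have Qscale : ∀ k : ℕ, ((k : K) * x) ∈ intQuotK (extDiffK α (FNcut K)) (FNcut K) := by
    intro k
    refine ⟨mul_nonneg (Nat.cast_nonneg k) hx0, fun b hb => ?_⟩
    obtain ⟨hb0, n, hbn⟩ := plusSet_FN hb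
    have hkb : (k : K) * b ≤ (k : K) * n := by
      have : (0:K) ≤ (k:K) := Nat.cast_nonneg k
      nlinarith
    have hckn : ((k * n : ℕ) : K) ≤ c := hc_ge (k * n)
    push_cast at hckn
    refine ⟨mul_nonneg (mul_nonneg (Nat.cast_nonneg k) hx0) hb0,
      x * (c - (k : K) * b), mul_nonneg hx0 (by linarith), ?_, ?_⟩
    · refine notFN_of_ge fun m => ?_
      have hcm : ((m + k * n : ℕ) : K) ≤ c := hc_ge (m + k * n)
      push_cast at hcm
      have h1 : (m : K) ≤ c - (k : K) * b := by linarith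
      have h2 : c - (k : K) * b ≤ x * (c - (k : K) * b) :=
        le_mul_of_one_le_left (by linarith) hx1
      linarith
    · have heq : (k : K) * x * b + x * (c - (k : K) * b) = x * c := by ring
      rw [heq]
      exact hxc
  have Q0 := Qscale 0
  simp only [Nat.cast_zero, zero_mul] at Q0
  constructor
  · -- interior ⊆ external sum
    rintro z ⟨hz0, hz⟩
    refine ⟨hz0, fun a ha0 haα b hb0 hbF => ?_⟩
    have hzA := hz 0 (Or.inl Q0)
    obtain ⟨_, d, hd0, hdF, hzd⟩ := hzA
    have hza : z < a := by
      by_contra hle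
      exact haα (hα2 a (z + 0 + d) ha0 (by linarith) hzd)
    linarith
  · -- external sum ⊆ closure
    rintro y ⟨hy0, hy⟩
    have Q3 := Qscale 3
    push_cast at Q3
    rcases le_or_gt (2 * x) y with h2 | h2
    · have hyx : y - x ∈ α := by
        by_contra hne
        have := hy (y - x) (by linarith) hne x hx0 hxF
        linarith
      refine ⟨hy0, y - 2 * x, ⟨by linarith, x, hx0, hxF, ?_⟩, 3 * x, Q3, by linarith⟩
      have heq : y - 2 * x + x = y - x := by ring
      rw [heq]
      exact hyx
    · exact ⟨hy0, 0, zeroA, 3 * x, Q3, by linarith⟩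
end
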